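/- Let K ≥ 1 and j ≥ 0 be integers and let a, b be real numbers. Set q := ⌊a + 2bK⌋ and ω := a + 2bK − q. Then the improper integrals below converge and I_{C₄}(K,j;a−q−1,b) = −i · exp(2πi a K + 2πi b K²) · ∑_{l=0}^{j} (−i)^l · binom(j,l) · Ĩ_{C₉}(K,l; 1−ω, b). -/

import Mathlib

open MeasureTheory
open scoped BigOperators

/-- The integrand of `I_{C₄}`, i.e. of the contour integral of
`z^j exp(2πi c z + 2πi b z²)` along the downward ray `{K−it : t ≥ 0}`. -/
noncomputable def fC4 (K j : ℕ) (c b : ℝ) (t : ℝ) : ℂ :=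
  ((K : ℂ) - Complex.I * (t : ℂ)) ^ j *
    Complex.exp (2 * (Real.pi : ℂ) * Complex.I * (c : ℂ) *
        ((K : ℂ) - Complex.I * (t : ℂ)) +
      2 * (Real.pi : ℂ) * Complex.I * (b : ℂ) *
        ((K : ℂ) - Complex.I * (t : ℂ)) ^ 2)

/-- `I_{C₄}(K,j;c,b) = −i K^{-j} ∫_0^∞ (K−it)^j exp(2πic(K−it) + 2πib(K−it)²) dt`. -/
noncomputable def IC4 (K j : ℕ) (c b : ℝ) : ℂ :=
  -Complex.I * ((K : ℂ) ^ j)⁻¹ * ∫ t in Set.Ioi (0 : ℝ), fC4 K j c b t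

/-- The integrand of `Ĩ_{C₉}(K,l;w,b)`. -/
noncomputable def ftC9 (l : ℕ) (w b : ℝ) (t : ℝ) : ℂ :=
  (t : ℂ) ^ l * Complex.exp (-2 * (Real.pi : ℂ) * (w : ℂ) * (t : ℂ) -
    2 * (Real.pi : ℂ) * Complex.I * (b : ℂ) * (t : ℂ) ^ 2)

/-- `Ĩ_{C₉}(K,l;w,b) = K^{-l} ∫_0^∞ t^l exp(−2πwt − 2πib t²) dt`. -/
noncomputable def ItC9 (K l : ℕ) (w b : ℝ) : ℂ :=
  ((K : ℂ) ^ l)⁻¹ * ∫ t in Set.Ioi (0 : ℝ), ftC9 l w b t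

lemma ftC9_integrable (l : ℕ) (w b : ℝ) (hw : 0 < w) :
    IntegrableOn (ftC9 l w b) (Set.Ioi (0 : ℝ)) := by
  have hreal : IntegrableOn (fun t : ℝ => t ^ (l : ℝ) * Real.exp (-(2 * Real.pi * w) * t ^ (1:ℝ)))
      (Set.Ioi (0 : ℝ)) :=
    integrableOn_rpow_mul_exp_neg_mul_rpow (lt_of_lt_of_le neg_one_lt_zero (Nat.cast_nonneg l)) zero_lt_one
      (by positivity)
  have hcont : Continuous (ftC9 l w b) := by
    unfold ftC9; fun_prop
  refine Integrable.mono' hreal hcont.aestronglyMeasurable.restrict ?_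
  filter_upwards [MeasureTheory.ae_restrict_mem measurableSet_Ioi] with t ht
  have ht0 : 0 < t := ht
  rw [ftC9]
  have hz : (-2 * (Real.pi : ℂ) * (w : ℂ) * (t : ℂ) -
      2 * (Real.pi : ℂ) * Complex.I * (b : ℂ) * (t : ℂ) ^ 2) =
      ((-(2 * Real.pi * w * t) : ℝ) : ℂ) + ((-(2 * Real.pi * b * t ^ 2) : ℝ) : ℂ) * Complex.I := by
    push_cast
    ring
  simp only [norm_mul, norm_pow, Complex.norm_exp, hz]
  have hre : (((-(2 * Real.pi * w * t) : ℝ) : ℂ) +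
      ((-(2 * Real.pi * b * t ^ 2) : ℝ) : ℂ) * Complex.I).re = -(2 * Real.pi * w) * t := by
    simp only [Complex.add_re, Complex.mul_re, Complex.ofReal_re, Complex.ofReal_im,
      Complex.I_re, Complex.I_im]
    ring
  rw [hre, Real.rpow_natCast, Real.rpow_one]
  simp [abs_of_pos ht0]

/-- The improper integrals converge and `I_{C₄}(K,j;a−q−1,b)` equals
`−i e^{2πiaK+2πibK²} ∑_{l=0}^{j} (−i)^l C(j,l) Ĩ_{C₉}(K,l;1−ω,b)`. -/
theorem IC4_isolated_term_eq (K : ℕ) (hK : 1 ≤ K) (j : ℕ) (a b : ℝ) :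
    IntegrableOn (fC4 K j (a - ((⌊a + 2 * b * K⌋ : ℤ) : ℝ) - 1) b) (Set.Ioi (0 : ℝ)) ∧
    (∀ l : ℕ, l ≤ j →
      IntegrableOn (ftC9 l (1 - Int.fract (a + 2 * b * K)) b) (Set.Ioi (0 : ℝ))) ∧
    IC4 K j (a - ((⌊a + 2 * b * K⌋ : ℤ) : ℝ) - 1) b =
      -Complex.I * Complex.exp (2 * (Real.pi : ℂ) * Complex.I * (a : ℂ) * (K : ℂ) +
          2 * (Real.pi : ℂ) * Complex.I * (b : ℂ) * (K : ℂ) ^ 2) *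
        ∑ l ∈ Finset.range (j + 1), (-Complex.I) ^ l * (j.choose l : ℂ) *
          ItC9 K l (1 - Int.fract (a + 2 * b * K)) b := by
  set q : ℤ := ⌊a + 2 * b * K⌋ with hq
  set w : ℝ := 1 - Int.fract (a + 2 * b * K) with hw
  have hw0 : 0 < w := by
    have := Int.fract_lt_one (a + 2 * b * K)
    simpa [hw] using sub_pos.mpr this
  set E : ℂ := Complex.exp (2 * (Real.pi : ℂ) * Complex.I * (a : ℂ) * (K : ℂ) +
      2 * (Real.pi : ℂ) * Complex.I * (b : ℂ) * (K : ℂ) ^ 2) with hE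
  set c : ℝ := a - (q : ℝ) - 1 with hc
  -- pointwise decomposition
  have key : ∀ t : ℝ, fC4 K j c b t =
      ∑ l ∈ Finset.range (j + 1),
        (E * (j.choose l : ℂ) * (K : ℂ) ^ (j - l) * (-Complex.I) ^ l) * ftC9 l w b t := by
    intro t
    have hexp : Complex.exp (2 * (Real.pi : ℂ) * Complex.I * (c : ℂ) *
        ((K : ℂ) - Complex.I * (t : ℂ)) +
      2 * (Real.pi : ℂ) * Complex.I * (b : ℂ) *
        ((K : ℂ) - Complex.I * (t : ℂ)) ^ 2) =
        E * Complex.exp (-2 * (Real.pi : ℂ) * (w : ℂ) * (t : ℂ) -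
          2 * (Real.pi : ℂ) * Complex.I * (b : ℂ) * (t : ℂ) ^ 2) := by
      have harg : 2 * (Real.pi : ℂ) * Complex.I * (c : ℂ) *
          ((K : ℂ) - Complex.I * (t : ℂ)) +
        2 * (Real.pi : ℂ) * Complex.I * (b : ℂ) *
          ((K : ℂ) - Complex.I * (t : ℂ)) ^ 2 =
          (2 * (Real.pi : ℂ) * Complex.I * (a : ℂ) * (K : ℂ) +
            2 * (Real.pi : ℂ) * Complex.I * (b : ℂ) * (K : ℂ) ^ 2) +
          (-2 * (Real.pi : ℂ) * (w : ℂ) * (t : ℂ) -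
            2 * (Real.pi : ℂ) * Complex.I * (b : ℂ) * (t : ℂ) ^ 2) +
          ((-(q + 1) * (K : ℤ) : ℤ) : ℂ) * (2 * (Real.pi : ℂ) * Complex.I) := by
        rw [hc, hw, Int.fract]
        push_cast
        linear_combination (-2 * (Real.pi : ℂ) * ((a : ℂ) - q - 1 + 2 * b * K) * t +
          2 * Real.pi * Complex.I * b * t ^ 2) * Complex.I_sq
      rw [harg, Complex.exp_add, Complex.exp_int_mul_two_pi_mul_I, mul_one, Complex.exp_add, hE]
    have hpow : ((K : ℂ) - Complex.I * (t : ℂ)) ^ j =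
        ∑ l ∈ Finset.range (j + 1),
          (j.choose l : ℂ) * (K : ℂ) ^ (j - l) * (-Complex.I) ^ l * (t : ℂ) ^ l := by
      rw [sub_eq_add_neg, add_comm, add_pow]
      refine Finset.sum_congr rfl fun l hl => ?_
      rw [neg_mul_eq_neg_mul, mul_pow]
      ring
    rw [fC4, hexp, hpow, Finset.sum_mul]
    refine Finset.sum_congr rfl fun l hl => ?_
    rw [ftC9]
    ring
  have hint : ∀ l, IntegrableOn (ftC9 l w b) (Set.Ioi (0 : ℝ)) :=
    fun l => ftC9_integrable l w b hw0
  have hfC4 : IntegrableOn (fC4 K j c b) (Set.Ioi (0 : ℝ)) := by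
    rw [show fC4 K j c b = fun t => ∑ l ∈ Finset.range (j + 1),
        (E * (j.choose l : ℂ) * (K : ℂ) ^ (j - l) * (-Complex.I) ^ l) * ftC9 l w b t
      from funext key]
    exact integrable_finset_sum _ fun l _ => (hint l).const_mul _
  refine ⟨hfC4, fun l _ => hint l, ?_⟩
  have hK0 : (K : ℂ) ≠ 0 := by
    exact_mod_cast Nat.cast_ne_zero.mpr (by omega)
  rw [IC4]
  rw [show (fun t => fC4 K j c b t) = fun t => ∑ l ∈ Finset.range (j + 1),
      (E * (j.choose l : ℂ) * (K : ℂ) ^ (j - l) * (-Complex.I) ^ l) * ftC9 l w b t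
    from funext key]
  rw [MeasureTheory.integral_finset_sum _ fun l _ => (hint l).const_mul _]
  rw [Finset.mul_sum, Finset.mul_sum]
  refine Finset.sum_congr rfl fun l hl => ?_
  rw [integral_const_mul, ItC9]
  have hKl : (K : ℂ) ^ (j - l) * (K : ℂ) ^ l = (K : ℂ) ^ j := by
    rw [← pow_add, Nat.sub_add_cancel (Nat.lt_succ_iff.mp (Finset.mem_range.mp hl))]
  rw [← hKl, mul_inv]
  field_simp
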